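/- For every real number a > 0, one has φ(a) ≥ 4 and φ(a) = φ(a⁻¹). -/

import Mathlib

/-- `φ(a) = ((a+1)/(a−1))·log(a²)` for `a ≠ 1`, with `φ(1) = 4` (its limiting value). -/
noncomputable def phi (a : ℝ) : ℝ :=
  if a = 1 then 4 else ((a + 1) / (a - 1)) * Real.log (a ^ 2)

lemma key_ineq (a : ℝ) (ha : 1 ≤ a) : 4 * (a - 1) ≤ 2 * (a + 1) * Real.log a := by
  set f : ℝ → ℝ := fun x => 2 * (x + 1) * Real.log x - 4 * (x - 1) with hf
  have hderiv : ∀ x : ℝ, 0 < x →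
      HasDerivAt f (2 * Real.log x + 2 * (x + 1) * x⁻¹ - 4) x := by
    intro x hx
    have h1 : HasDerivAt (fun y : ℝ => 2 * (y + 1) * Real.log y)
        (2 * Real.log x + 2 * (x + 1) * x⁻¹) x := by
      have hl : HasDerivAt Real.log x⁻¹ x := Real.hasDerivAt_log hx.ne'
      have hm : HasDerivAt (fun y : ℝ => 2 * (y + 1)) 2 x := by
        simpa using ((hasDerivAt_id x).add_const 1).const_mul 2
      exact hm.mul hl
    have h2 : HasDerivAt (fun y : ℝ => 4 * (y - 1)) 4 x := by
      simpa using ((hasDerivAt_id x).sub_const 1).const_mul 4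
    exact h1.sub h2
  have hmono : MonotoneOn f (Set.Ici (1 : ℝ)) := by
    apply monotoneOn_of_deriv_nonneg (convex_Ici 1)
    · apply ContinuousOn.sub
      · exact (continuousOn_const.mul (continuousOn_id.add continuousOn_const)).mul
          (Real.continuousOn_log.mono (by intro x hx; simp at hx ⊢; linarith))
      · fun_prop
    · intro x hx
      rw [interior_Ici] at hx
      exact (hderiv x (by linarith [Set.mem_Ioi.mp hx])).differentiableAt.differentiableWithinAt
    · intro x hx
      rw [interior_Ici] at hx
      have hx1 : (1 : ℝ) < x := hx
      have hx0 : (0 : ℝ) < x := by linarith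
      rw [(hderiv x hx0).deriv]
      have hlog : Real.log x⁻¹ ≤ x⁻¹ - 1 := Real.log_le_sub_one_of_pos (by positivity)
      rw [Real.log_inv] at hlog
      have hxi : x⁻¹ ≤ 1 := by rw [inv_le_one_iff₀]; right; linarith
      have : 2 * (x + 1) * x⁻¹ = 2 + 2 * x⁻¹ := by field_simp
      rw [this]
      nlinarith
  have h1 : f 1 ≤ f a := hmono (by simp) (by simpa using ha) ha
  simp only [hf, Real.log_one] at h1
  linarith

lemma phi_ge_of_one_lt (a : ℝ) (ha : 1 < a) : 4 ≤ phi a := by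
  rw [phi, if_neg (by linarith)]
  have h0 : 0 < a := by linarith
  have hlog : Real.log (a ^ 2) = 2 * Real.log a := by
    rw [Real.log_pow]; push_cast; ring
  rw [hlog, div_mul_eq_mul_div, le_div_iff₀ (by linarith : (0:ℝ) < a - 1)]
  have := key_ineq a ha.le
  nlinarith

theorem four_le_phi_and_phi_inv (a : ℝ) (ha : 0 < a) : 4 ≤ phi a ∧ phi a = phi a⁻¹ := by
  have hsym : phi a = phi a⁻¹ := by
    rcases eq_or_ne a 1 with h1 | h1
    · simp [h1]
    · have h1' : a⁻¹ ≠ 1 := by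
        intro h; apply h1; rw [← inv_inv a, h, inv_one]
      rw [phi, phi, if_neg h1, if_neg h1', inv_pow, Real.log_inv]
      have ha0 : a ≠ 0 := ha.ne'
      have hm1 : a - 1 ≠ 0 := sub_ne_zero.mpr h1
      have hm2 : a⁻¹ - 1 ≠ 0 := sub_ne_zero.mpr h1'
      have h3 : (1:ℝ) - a ≠ 0 := sub_ne_zero.mpr h1.symm
      field_simp
      ring
  refine ⟨?_, hsym⟩
  rcases lt_trichotomy a 1 with h | h | h
  · rw [hsym]
    exact phi_ge_of_one_lt a⁻¹ ((one_lt_inv₀ ha).mpr h)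
  · simp [phi, h]
  · exact phi_ge_of_one_lt a h
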